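/- Let G be a finite group, N a normal subgroup of G contained in the derived subgroup G', with N a minimal normal subgroup of G that is an elementary abelian p-group. If G' is quasinilpotent, then G'/C_{G'}(N) is a p-group, and consequently (G/C_G(N))' is a p-group. -/

import Mathlib

/-- `N` is a minimal normal subgroup of `G`. -/
def IsMinimalNormal {G : Type*} [Group G] (N : Subgroup G) : Prop :=
  N.Normal ∧ N ≠ ⊥ ∧ ∀ M : Subgroup G, M.Normal → M ≤ N → M = ⊥ ∨ M = N

/-- `X` is quasinilpotent: every element of `X` induces an inner automorphism
on every chief factor `U/V` of `X`. -/
def IsQuasinilpotent (X : Type*) [Group X] : Prop :=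
  ∀ (U V : Subgroup X) [U.Normal] [V.Normal], V < U →
    IsMinimalNormal (U.map (QuotientGroup.mk' V)) →
    ∀ x : X, ∃ w ∈ U, ∀ u ∈ U, x * u * x⁻¹ * (w * u * w⁻¹)⁻¹ ∈ V

/-- The centralizer of a normal subgroup is normal. -/
instance centralizerNormal {G : Type*} [Group G] (N : Subgroup G) [hN : N.Normal] :
    (Subgroup.centralizer (N : Set G)).Normal := by
  constructor
  intro c hc g
  rw [Subgroup.mem_centralizer_iff] at hc ⊢
  intro n hn
  have h1 : g⁻¹ * n * g ∈ N := by
    have := hN.conj_mem n hn g⁻¹; simpa using this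
  have h2 := hc _ h1
  calc n * (g * c * g⁻¹) = g * ((g⁻¹ * n * g) * c) * g⁻¹ := by group
    _ = g * (c * (g⁻¹ * n * g)) * g⁻¹ := by rw [h2]
    _ = g * c * g⁻¹ * n := by group

lemma aux19 {X : Type*} [Group X] [Finite X] {p : ℕ}
    (hq : IsQuasinilpotent X) (A : Subgroup X)
    (habA : ∀ u ∈ A, ∀ v ∈ A, u * v = v * u) (hexpA : ∀ u ∈ A, u ^ p = 1) :
    ∀ M : Subgroup X, M.Normal → M ≤ A →
      ∀ x : X, ∃ k, ∀ n ∈ M, x ^ p ^ k * n = n * x ^ p ^ k := by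
  suffices H : ∀ c : ℕ, ∀ M : Subgroup X, Nat.card M ≤ c → M.Normal → M ≤ A →
      ∀ x : X, ∃ k, ∀ n ∈ M, x ^ p ^ k * n = n * x ^ p ^ k by
    exact fun M => H (Nat.card M) M le_rfl
  intro c
  induction c with
  | zero =>
    intro M hcard _ _ _
    have : 0 < Nat.card M := Nat.card_pos
    omega
  | succ c ih =>
    intro M hcard hM hMA x
    by_cases hbot : M = ⊥
    · exact ⟨0, by subst hbot; intro n hn; rw [Subgroup.mem_bot] at hn; subst hn; group⟩
    -- pick a maximal proper X-normal subgroup V of M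
    obtain ⟨V, ⟨hVn, hVM⟩, hVmax⟩ :=
      Set.Finite.exists_maximalFor id {W : Subgroup X | W.Normal ∧ W < M}
        (Set.toFinite _) ⟨⊥, ⟨inferInstance, bot_lt_iff_ne_bot.mpr hbot⟩⟩
    haveI := hVn; haveI := hM
    have hker : (QuotientGroup.mk' V).ker = V := QuotientGroup.ker_mk' V
    have hminq : IsMinimalNormal (M.map (QuotientGroup.mk' V)) := by
      refine ⟨Subgroup.Normal.map hM _ (QuotientGroup.mk'_surjective V), ?_, ?_⟩
      · intro h
        rw [Subgroup.map_eq_bot_iff, hker] at h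
        exact hVM.not_ge h
      · intro K' hK'n hK'le
        set K := Subgroup.comap (QuotientGroup.mk' V) K' with hK
        haveI : K.Normal := hK'n.comap _
        have hVK : V ≤ K := hker ▸ Subgroup.ker_le_comap _ _
        have hKM : K ≤ M := by
          calc K ≤ Subgroup.comap (QuotientGroup.mk' V) (M.map (QuotientGroup.mk' V)) :=
                Subgroup.comap_mono hK'le
            _ = M ⊔ V := by rw [Subgroup.comap_map_eq, hker]
            _ = M := sup_eq_left.mpr hVM.le
        have hK' : K' = K.map (QuotientGroup.mk' V) :=
          (Subgroup.map_comap_eq_self_of_surjective (QuotientGroup.mk'_surjective V) K').symm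
        by_cases hKe : K = M
        · right; rw [hK', hKe]
        · left
          have : V = K := le_antisymm hVK (hVmax (j := K) ⟨inferInstance, lt_of_le_of_ne hKM hKe⟩ hVK)
          rw [hK', ← this, Subgroup.map_eq_bot_iff, hker]
    obtain ⟨w, hw, hcomm⟩ := hq M V hVM hminq x
    have hx : ∀ u ∈ M, x * u * x⁻¹ * u⁻¹ ∈ V := by
      intro u hu
      have h1 := hcomm u hu
      have h2 : w * u * w⁻¹ = u := by
        rw [habA w (hMA hw) u (hMA hu)]; group
      rwa [h2] at h1
    -- iterate: conjugation by any power of x moves elements of M by an element of V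
    have hxm : ∀ m : ℕ, ∀ u ∈ M, x ^ m * u * (x ^ m)⁻¹ * u⁻¹ ∈ V := by
      intro m
      induction m with
      | zero => intro u hu; simpa using V.one_mem
      | succ m ihm =>
        intro u hu
        have e : x ^ (m + 1) * u * (x ^ (m + 1))⁻¹ * u⁻¹ =
            (x * (x ^ m * u * (x ^ m)⁻¹ * u⁻¹) * x⁻¹) * (x * u * x⁻¹ * u⁻¹) := by
          rw [pow_succ']; group
        rw [e]
        exact V.mul_mem (hVn.conj_mem _ (ihm u hu) x) (hx u hu)
    -- inductive hypothesis on V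
    have hcV : Nat.card V ≤ c := by
      have h1 : Nat.card V < Nat.card M := by
        have h2 := Set.ncard_lt_ncard (SetLike.coe_ssubset_coe.mpr hVM) (Set.toFinite _)
        simpa [← Nat.card_coe_set_eq] using h2
      omega
    obtain ⟨k, hk⟩ := ih V hcV hVn (hVM.le.trans hMA) x
    refine ⟨k + 1, ?_⟩
    intro u hu
    set y := x ^ p ^ k with hy
    have hyV : ∀ v ∈ V, y * v = v * y := hk
    set cu := y * u * y⁻¹ * u⁻¹ with hcu
    have hcuV : cu ∈ V := hxm (p ^ k) u hu
    have hiter : ∀ j : ℕ, y ^ j * u * (y ^ j)⁻¹ = cu ^ j * u := by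
      intro j
      induction j with
      | zero => group
      | succ j ihj =>
        have e1 : y ^ (j + 1) * u * (y ^ (j + 1))⁻¹ = y * (y ^ j * u * (y ^ j)⁻¹) * y⁻¹ := by
          rw [pow_succ']; group
        rw [e1, ihj]
        have e2 : y * cu ^ j = cu ^ j * y := hyV _ (V.pow_mem hcuV j)
        calc y * (cu ^ j * u) * y⁻¹ = (y * cu ^ j) * u * y⁻¹ := by group
          _ = cu ^ j * (y * u * y⁻¹) := by rw [e2]; group
          _ = cu ^ j * (cu * u) := by
              congr 1
              rw [hcu]; group
          _ = cu ^ (j + 1) * u := by rw [pow_succ]; group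
    have hcup : cu ^ p = 1 := hexpA cu (hMA (hVM.le hcuV))
    have : y ^ p * u * (y ^ p)⁻¹ = u := by rw [hiter p, hcup, one_mul]
    have e3 : x ^ p ^ (k + 1) = y ^ p := by rw [hy, ← pow_mul, pow_succ]
    rw [e3]
    calc y ^ p * u = (y ^ p * u * (y ^ p)⁻¹) * y ^ p := by group
      _ = u * y ^ p := by rw [this]

/-- Let `N ≤ G'` be a minimal normal subgroup of a finite group `G` which is
an elementary abelian `p`-group.  If `G'` is quasinilpotent, then
`G'/C_{G'}(N)` is a `p`-group, and consequently `(G/C_G(N))'` is a `p`-group. -/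
theorem stmt19 {G : Type} [Group G] [Finite G] {p : ℕ} (hp : p.Prime)
    (N : Subgroup G) [N.Normal] (hmin : IsMinimalNormal N)
    (hle : N ≤ commutator G)
    (hab : ∀ x y : N, x * y = y * x) (hpgrp : IsPGroup p N)
    (hexp : ∀ x : N, x ^ p = 1)
    (hq : IsQuasinilpotent (commutator G)) :
    IsPGroup p
      ((commutator G : Subgroup G) ⧸
        (Subgroup.centralizer (N : Set G)).subgroupOf (commutator G)) ∧
    IsPGroup p (commutator (G ⧸ Subgroup.centralizer (N : Set G))) := by
  set C := Subgroup.centralizer (N : Set G) with hC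
  set X := (commutator G : Subgroup G)
  set A := N.subgroupOf (commutator G) with hA
  have habA : ∀ u ∈ A, ∀ v ∈ A, u * v = v * u := by
    intro u hu v hv
    rw [Subgroup.mem_subgroupOf] at hu hv
    have := congrArg Subtype.val (hab ⟨(u : G), hu⟩ ⟨(v : G), hv⟩)
    exact Subtype.ext (by simpa using this)
  have hexpA : ∀ u ∈ A, u ^ p = 1 := by
    intro u hu
    rw [Subgroup.mem_subgroupOf] at hu
    have := congrArg Subtype.val (hexp ⟨(u : G), hu⟩)
    exact Subtype.ext (by simpa using this)
  have key : ∀ g ∈ commutator G, ∃ k, g ^ p ^ k ∈ C := by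
    intro g hg
    obtain ⟨k, hk⟩ := aux19 hq A habA hexpA A inferInstance le_rfl ⟨g, hg⟩
    refine ⟨k, ?_⟩
    rw [hC, Subgroup.mem_centralizer_iff]
    intro n hn
    have hn' : (⟨n, hle hn⟩ : X) ∈ A := Subgroup.mem_subgroupOf.mpr hn
    have := congrArg Subtype.val (hk _ hn')
    simpa using this.symm
  constructor
  · intro q
    refine QuotientGroup.induction_on q ?_
    intro x
    obtain ⟨k, hk⟩ := key x.1 x.2
    refine ⟨k, ?_⟩
    have h1 : ((x : X) ^ p ^ k) ∈ C.subgroupOf (commutator G) :=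
      Subgroup.mem_subgroupOf.mpr (by simpa using hk)
    calc (QuotientGroup.mk x : X ⧸ C.subgroupOf (commutator G)) ^ p ^ k
        = QuotientGroup.mk (x ^ p ^ k) := by
          rw [← QuotientGroup.mk'_apply, ← QuotientGroup.mk'_apply, ← map_pow]
      _ = 1 := (QuotientGroup.eq_one_iff _).mpr h1
  · intro y
    have hmap : Subgroup.map (QuotientGroup.mk' C) (commutator G) = commutator (G ⧸ C) := by
      rw [commutator_def, commutator_def, Subgroup.map_commutator,
        Subgroup.map_top_of_surjective _ (QuotientGroup.mk'_surjective C)]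
    have hy2 : (y : G ⧸ C) ∈ Subgroup.map (QuotientGroup.mk' C) (commutator G) := by
      rw [hmap]; exact y.2
    obtain ⟨g, hg, hgy⟩ := Subgroup.mem_map.mp hy2
    obtain ⟨k, hk⟩ := key g hg
    refine ⟨k, ?_⟩
    have h1 : (y : G ⧸ C) ^ p ^ k = 1 := by
      rw [← hgy, ← map_pow, QuotientGroup.mk'_apply, QuotientGroup.eq_one_iff]
      exact hk
    exact Subtype.ext (by simpa using h1)
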